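/- Let ṽ(s,τ) = p/(1-p) − (α/2)(e^{s/p} − e^{s₀/p}) τ. Then for s ≥ s₀ (where s₀ satisfies e^{((1-p)/p)s} f̃(s) ≥ (α/2) e^{s/p} for s ≥ s₀) and τ ∈ (0, τ₀], ṽ satisfies ∂_τ ṽ − L_s ṽ + e^{((1-p)/p)s} f̃(s) ≥ 0 and −∂_s ṽ ≥ 0, i.e. ṽ is a supersolution to the gradient-constrained problem on (s₀, ∞) × (0, τ₀]; moreover ṽ(s,τ₀) < 0 whenever s > p ln(e^{s₀/p} + (2/α)(p/((1-p)τ₀))). -/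

import Mathlib

open Real

/-- The piecewise function `f̃(s) = f(e^s)`. -/
noncomputable def ftilde (p α : ℝ) : ℝ → ℝ := fun s =>
  if -p * Real.log α ≤ s then α * Real.exp s - α ^ (1 - p) / (1 - p)
  else if 0 < s then -(p / (1 - p)) * Real.exp ((p - 1) / p * s)
  else Real.exp s - 1 / (1 - p)

/-- `ṽ(s,τ) = p/(1-p) - (α/2)(e^{s/p} - e^{s₀/p})τ`, whose partial derivatives are
`∂_τ ṽ = -(α/2)(e^{s/p} - e^{s₀/p})`, `∂_s ṽ = -(α/(2p)) e^{s/p} τ`,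
`∂_{ss} ṽ = -(α/(2p²)) e^{s/p} τ`, is a supersolution of the gradient-constrained
problem on `(s₀,∞) × (0,τ₀]`, and `ṽ(s,τ₀) < 0` for `s` large. -/
theorem stmt_8 (p α μ σ δ τ₀ s₀ : ℝ) (hp0 : 0 < p) (hp1 : p < 1) (hα0 : 0 < α) (hα1 : α < 1)
    (hμ : 0 < μ) (hσ : 0 < σ) (hδ : μ ^ 2 * (1 - p) / (2 * p * σ ^ 2) + p ≤ δ)
    (hτ₀ : 0 < τ₀)
    (hs₀ : ∀ s : ℝ, s₀ ≤ s →
      α / 2 * Real.exp (s / p) ≤ Real.exp ((1 - p) / p * s) * ftilde p α s) :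
    (∀ s τ : ℝ, s₀ ≤ s → 0 < τ → τ ≤ τ₀ →
      0 ≤ -(α / 2) * (Real.exp (s / p) - Real.exp (s₀ / p))
          - (μ ^ 2 / (2 * σ ^ 2) * (-(α / (2 * p ^ 2)) * Real.exp (s / p) * τ)
            - ((2 - p) * μ ^ 2 / (2 * p * σ ^ 2) - δ) * (-(α / (2 * p)) * Real.exp (s / p) * τ)
            - (δ / p - μ ^ 2 * (1 - p) / (2 * p ^ 2 * σ ^ 2))
              * (p / (1 - p) - α / 2 * (Real.exp (s / p) - Real.exp (s₀ / p)) * τ))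
          + Real.exp ((1 - p) / p * s) * ftilde p α s ∧
      0 ≤ -(-(α / (2 * p)) * Real.exp (s / p) * τ)) ∧
    (∀ s : ℝ, p * Real.log (Real.exp (s₀ / p) + 2 / α * (p / ((1 - p) * τ₀))) < s →
      p / (1 - p) - α / 2 * (Real.exp (s / p) - Real.exp (s₀ / p)) * τ₀ < 0) := by
  have h1p : (0 : ℝ) < 1 - p := by linarith
  have hpne : p ≠ 0 := hp0.ne'
  have hσne : σ ≠ 0 := hσ.ne'
  have h1pne : (1 : ℝ) - p ≠ 0 := h1p.ne'
  have hc1 : 1 ≤ δ / p - μ ^ 2 * (1 - p) / (2 * p ^ 2 * σ ^ 2) := by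
    rw [le_sub_iff_add_le, le_div_iff₀ hp0]
    have heq : (1 + μ ^ 2 * (1 - p) / (2 * p ^ 2 * σ ^ 2)) * p
        = p + μ ^ 2 * (1 - p) / (2 * p * σ ^ 2) := by field_simp
    rw [heq]; linarith
  constructor
  · intro s τ hs hτ hττ
    set A := Real.exp (s / p) with hA
    set E := Real.exp (s₀ / p) with hE
    have hApos : 0 < A := Real.exp_pos _
    have hEpos : 0 < E := Real.exp_pos _
    have hR := hs₀ s hs
    set R := Real.exp ((1 - p) / p * s) * ftilde p α s with hRdef
    set c := δ / p - μ ^ 2 * (1 - p) / (2 * p ^ 2 * σ ^ 2) with hc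
    constructor
    · have key : -(α / 2) * (A - E)
          - (μ ^ 2 / (2 * σ ^ 2) * (-(α / (2 * p ^ 2)) * A * τ)
            - ((2 - p) * μ ^ 2 / (2 * p * σ ^ 2) - δ) * (-(α / (2 * p)) * A * τ)
            - c * (p / (1 - p) - α / 2 * (A - E) * τ)) + R
          = (R - α / 2 * A) + α / 2 * E + c * (p / (1 - p) + α / 2 * E * τ) := by
        rw [hc]; field_simp; ring
      rw [key]
      have h1 : 0 ≤ R - α / 2 * A := by linarith
      have h2 : 0 < α / 2 * E := by positivity
      have h3 : 0 < p / (1 - p) + α / 2 * E * τ := by positivity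
      have h4 : 0 ≤ c * (p / (1 - p) + α / 2 * E * τ) :=
        mul_nonneg (by linarith) h3.le
      linarith
    · have : 0 ≤ α / (2 * p) * A * τ := by positivity
      linarith
  · intro s hs
    have hargpos : 0 < Real.exp (s₀ / p) + 2 / α * (p / ((1 - p) * τ₀)) := by positivity
    have hlt : Real.exp (s₀ / p) + 2 / α * (p / ((1 - p) * τ₀)) < Real.exp (s / p) := by
      rw [← Real.exp_log hargpos]
      apply Real.exp_lt_exp.mpr
      rw [lt_div_iff₀ hp0]
      linarith [hs]
    have h2 : 2 / α * (p / ((1 - p) * τ₀)) < Real.exp (s / p) - Real.exp (s₀ / p) := by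
      linarith
    have h3 : p / (1 - p) < α / 2 * (Real.exp (s / p) - Real.exp (s₀ / p)) * τ₀ := by
      have := mul_lt_mul_of_pos_left h2 (show 0 < α / 2 * τ₀ by positivity)
      calc p / (1 - p) = α / 2 * τ₀ * (2 / α * (p / ((1 - p) * τ₀))) := by
            field_simp
        _ < α / 2 * τ₀ * (Real.exp (s / p) - Real.exp (s₀ / p)) := this
        _ = α / 2 * (Real.exp (s / p) - Real.exp (s₀ / p)) * τ₀ := by ring
    linarith
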